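/- Let n ≥ 1, 0 < α ≤ 1 and C > 0. Let h : B(0,1) ⊂ ℝⁿ → ℝ be a continuous function such that for every 0 < r < 1/2 and all y, z ∈ B(0,r) with y ≠ z, |h(y) − h(z)| ≤ |y − z|^α · ( (C/r^α) ⨍_{B(0,2r)} |h| + C r^{2−α} ). If ⨍_{B(0,r)} |h(y)| dy = o(r²) as r → 0⁺, then sup_{y ∈ B(0,r/2)} |h(y)| = o(r²) as r → 0⁺. -/

import Mathlib

open MeasureTheory Metric Filter Finset Topology Asymptotics

noncomputable section

/-- The `j`-th elementary symmetric function `S_j` on `ℝⁿ`. -/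
def esymm (n j : ℕ) (lam : Fin n → ℝ) : ℝ :=
  ∑ s ∈ Finset.powersetCard j (Finset.univ : Finset (Fin n)), ∏ i ∈ s, lam i

/-- The eigenvalue vector of a symmetric matrix (junk value `0` if not symmetric). -/
def eigs (n : ℕ) (A : Matrix (Fin n) (Fin n) ℝ) : Fin n → ℝ :=
  if h : A.IsHermitian then h.eigenvalues else 0

/-- The cone `Γ_k = {λ : S_j(λ) ≥ 0, j = 1,…,k}`. -/
def Gamma (n k : ℕ) : Set (Fin n → ℝ) :=
  {lam | ∀ j, 1 ≤ j → j ≤ k → 0 ≤ esymm n j lam}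

/-- A quadratic polynomial with constant Hessian `A`. -/
def quadPoly (n : ℕ) (c : ℝ) (b : Fin n → ℝ) (A : Matrix (Fin n) (Fin n) ℝ)
    (x : EuclideanSpace ℝ (Fin n)) : ℝ :=
  c + ∑ i, b i * x i + (1 / 2) * ∑ i, ∑ j, A i j * x i * x j

/-- Viscosity definition of `k`-convexity on an open set `Ω`. -/
def KConvex (n k : ℕ) (Ω : Set (EuclideanSpace ℝ (Fin n)))
    (u : EuclideanSpace ℝ (Fin n) → EReal) : Prop :=
  UpperSemicontinuousOn u Ω ∧
  (∀ x, u x ≠ ⊤) ∧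
  (∀ x ∈ Ω, ∃ y ∈ connectedComponentIn Ω x, u y ≠ ⊥) ∧
  ∀ (c : ℝ) (b : Fin n → ℝ) (A : Matrix (Fin n) (Fin n) ℝ), A.IsHermitian →
    ∀ x₀ ∈ Ω, u x₀ ≠ ⊥ →
      IsLocalMaxOn (fun x => u x - (quadPoly n c b A x : EReal)) Ω x₀ →
      eigs n A ∈ Gamma n k

/-- Second partial derivatives (Hessian matrix) of a function on `ℝⁿ`. -/
def hess (n : ℕ) (f : EuclideanSpace ℝ (Fin n) → ℝ) (x : EuclideanSpace ℝ (Fin n)) :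
    Matrix (Fin n) (Fin n) ℝ :=
  Matrix.of fun i j =>
    fderiv ℝ (fun y => fderiv ℝ f y (EuclideanSpace.single j 1)) x (EuclideanSpace.single i 1)

set_option maxHeartbeats 1000000

/-- The interpolation step: if a continuous function `h` on the unit ball satisfies the
interior Hölder-type estimate and its `L¹`-means over balls `B(0,r)` are `o(r²)`, then its
supremum over the half-balls `B(0, r/2)` is also `o(r²)` as `r → 0⁺`. -/
theorem sup_littleO_of_mean_littleO
    (n : ℕ) (hn : 1 ≤ n) (α C : ℝ) (hα0 : 0 < α) (hα1 : α ≤ 1) (hC : 0 < C)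
    (h : EuclideanSpace ℝ (Fin n) → ℝ)
    (hcont : ContinuousOn h (ball (0 : EuclideanSpace ℝ (Fin n)) 1))
    (hHolder : ∀ r : ℝ, 0 < r → r < 1 / 2 →
      ∀ y ∈ ball (0 : EuclideanSpace ℝ (Fin n)) r,
        ∀ z ∈ ball (0 : EuclideanSpace ℝ (Fin n)) r, y ≠ z →
        |h y - h z| ≤ ‖y - z‖ ^ α *
          (C / r ^ α * (⨍ w in ball (0 : EuclideanSpace ℝ (Fin n)) (2 * r), |h w|)
            + C * r ^ (2 - α)))
    (hmean : (fun r : ℝ => ⨍ w in ball (0 : EuclideanSpace ℝ (Fin n)) r, |h w|)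
      =o[𝓝[>] (0 : ℝ)] (fun r => r ^ 2)) :
    ∀ ε : ℝ, 0 < ε → ∃ δ : ℝ, 0 < δ ∧ ∀ r : ℝ, 0 < r → r < δ →
      ∀ y ∈ ball (0 : EuclideanSpace ℝ (Fin n)) (r / 2), |h y| ≤ ε * r ^ 2 := by
  intro ε hε
  haveI : Nontrivial (EuclideanSpace ℝ (Fin n)) :=
    Module.nontrivial_of_finrank_pos (R := ℝ)
      (by rw [finrank_euclideanSpace_fin]; omega)
  set A : ℝ → ℝ := fun r => ⨍ w in ball (0 : EuclideanSpace ℝ (Fin n)) r, |h w| with hA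
  -- choose θ
  set θ : ℝ := min (1/2) ((ε/(3*C)) ^ (1/α)) with hθdef
  have hθ0 : 0 < θ := lt_min (by norm_num) (Real.rpow_pos_of_pos (by positivity) _)
  have hθhalf : θ ≤ 1/2 := min_le_left _ _
  have hθα1 : θ ^ α ≤ 1 := Real.rpow_le_one hθ0.le (by linarith) hα0.le
  have hθα : C * θ ^ α ≤ ε / 3 := by
    have h1 : θ ^ α ≤ ((ε/(3*C)) ^ (1/α)) ^ α :=
      Real.rpow_le_rpow hθ0.le (min_le_right _ _) hα0.le
    rw [← Real.rpow_mul (by positivity), one_div_mul_cancel hα0.ne', Real.rpow_one] at h1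
    calc C * θ ^ α ≤ C * (ε/(3*C)) := by nlinarith
      _ = ε / 3 := by field_simp
  -- choose δ from the little-o hypothesis
  set c : ℝ := min (ε/(12*C)) (ε/3 * θ^n) with hcdef
  have hc0 : 0 < c := lt_min (by positivity) (by positivity)
  have hev : ∀ᶠ r in 𝓝[>] (0:ℝ), ‖A r‖ ≤ c * ‖r^2‖ := hmean.def hc0
  rw [eventually_nhdsWithin_iff, Metric.eventually_nhds_iff] at hev
  obtain ⟨δ₁, hδ₁0, hδ₁⟩ := hev
  have hbound : ∀ x : ℝ, 0 < x → x < δ₁ → A x ≤ c * x^2 := by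
    intro x hx0 hx1
    have hd : dist x (0:ℝ) < δ₁ := by simpa [abs_of_pos hx0] using hx1
    have := hδ₁ hd hx0
    calc A x ≤ |A x| := le_abs_self _
      _ ≤ c * |x^2| := this
      _ = c * x^2 := by rw [abs_of_nonneg (by positivity)]
  refine ⟨min (δ₁/2) (1/2), lt_min (by positivity) (by norm_num), ?_⟩
  intro r hr0 hrδ y hy
  have hr12 : r < 1/2 := lt_of_lt_of_le hrδ (min_le_right _ _)
  have hrδ₁ : 2 * r < δ₁ := by
    have := lt_of_lt_of_le hrδ (min_le_left _ _); linarith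
  set ρ : ℝ := θ * r with hρdef
  have hρ0 : 0 < ρ := by positivity
  have hy' : dist y (0 : EuclideanSpace ℝ (Fin n)) < r/2 := mem_ball.1 hy
  have hsub1 : ball y ρ ⊆ ball (0 : EuclideanSpace ℝ (Fin n)) r := by
    apply ball_subset_ball'
    have : ρ ≤ r/2 := by nlinarith
    linarith
  have hsub2 : closedBall (0 : EuclideanSpace ℝ (Fin n)) r ⊆
      ball (0 : EuclideanSpace ℝ (Fin n)) 1 := closedBall_subset_ball (by linarith)
  have hint : IntegrableOn (fun w => |h w|) (ball (0 : EuclideanSpace ℝ (Fin n)) r) volume :=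
    ((hcont.mono hsub2).abs.integrableOn_compact (isCompact_closedBall _ _)).mono_set
      ball_subset_closedBall
  have hint2 : IntegrableOn (fun w => |h w|) (ball y ρ) volume := hint.mono_set hsub1
  -- find a good point z
  obtain ⟨z, hz, hzle⟩ := exists_le_setAverage (measure_ball_pos volume y hρ0).ne'
    measure_ball_lt_top.ne hint2
  -- average comparison
  set v : ℝ := (volume (ball (0 : EuclideanSpace ℝ (Fin n)) 1)).toReal with hv
  have hv0 : 0 < v := by
    rw [hv]
    exact ENNReal.toReal_pos (measure_ball_pos volume _ one_pos).ne' measure_ball_lt_top.ne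
  have hvol : ∀ (x : EuclideanSpace ℝ (Fin n)) (t : ℝ), 0 < t →
      (volume (ball x t)).toReal = t ^ n * v := by
    intro x t ht
    rw [Measure.addHaar_ball volume x ht.le, ENNReal.toReal_mul,
      ENNReal.toReal_ofReal (by positivity), finrank_euclideanSpace_fin]
  have havg : (⨍ w in ball y ρ, |h w|) ≤ θ⁻¹ ^ n * A r := by
    rw [setAverage_eq]
    simp only [hA, setAverage_eq, smul_eq_mul]
    rw [measureReal_def, measureReal_def, hvol y ρ hρ0, hvol 0 r hr0]
    have hmono : ∫ w in ball y ρ, |h w| ≤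
        ∫ w in ball (0 : EuclideanSpace ℝ (Fin n)) r, |h w| :=
      setIntegral_mono_set hint (Eventually.of_forall fun w => abs_nonneg _)
        (HasSubset.Subset.eventuallyLE hsub1)
    have hρr : ρ ^ n = θ ^ n * r ^ n := mul_pow θ r n
    rw [hρr, inv_pow, show (θ ^ n * r ^ n * v)⁻¹ = (θ ^ n)⁻¹ * (r ^ n * v)⁻¹ by
      rw [mul_assoc, mul_inv], mul_assoc]
    exact mul_le_mul_of_nonneg_left
      (mul_le_mul_of_nonneg_left hmono (by positivity)) (by positivity)
  have hAr : A r ≤ c * r^2 := hbound r hr0 (by linarith)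
  have hA2r : A (2*r) ≤ c * (2*r)^2 := hbound _ (by linarith) hrδ₁
  have hA2r0 : 0 ≤ A (2*r) := by
    simp only [hA, setAverage_eq, smul_eq_mul]
    exact mul_nonneg (by positivity)
      (setIntegral_nonneg measurableSet_ball fun w _ => abs_nonneg _)
  have hzbound : |h z| ≤ θ⁻¹ ^ n * (c * r ^ 2) :=
    hzle.trans (havg.trans (mul_le_mul_of_nonneg_left hAr (by positivity)))
  have hterm1 : θ⁻¹ ^ n * (c * r ^ 2) ≤ ε/3 * r^2 := by
    have hcle : c ≤ ε/3 * θ^n := min_le_right _ _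
    have hkey : θ⁻¹ ^ n * c ≤ ε/3 := by
      rw [inv_pow, inv_mul_le_iff₀ (by positivity)]
      calc c ≤ ε/3 * θ^n := hcle
        _ = θ^n * (ε/3) := mul_comm _ _
    nlinarith [sq_nonneg r]
  rcases eq_or_ne y z with hyz | hyz
  · rw [hyz]
    calc |h z| ≤ θ⁻¹ ^ n * (c * r ^ 2) := hzbound
      _ ≤ ε/3 * r^2 := hterm1
      _ ≤ ε * r^2 := by nlinarith [sq_nonneg r]
  · have hyB : y ∈ ball (0 : EuclideanSpace ℝ (Fin n)) r := ball_subset_ball (by linarith) hy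
    have hzB : z ∈ ball (0 : EuclideanSpace ℝ (Fin n)) r := hsub1 hz
    have hHo := hHolder r hr0 hr12 y hyB z hzB hyz
    have hdist : ‖y - z‖ ≤ ρ := by
      have := mem_ball.1 hz
      rw [dist_comm] at this
      rw [← dist_eq_norm]
      exact this.le
    have hnorm : ‖y - z‖ ^ α ≤ ρ ^ α := Real.rpow_le_rpow (norm_nonneg _) hdist hα0.le
    have hrα0 : (0:ℝ) < r ^ α := Real.rpow_pos_of_pos hr0 _
    have hr2α0 : (0:ℝ) < r ^ (2-α) := Real.rpow_pos_of_pos hr0 _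
    have hbrk : 0 ≤ C / r ^ α * A (2*r) + C * r ^ (2 - α) := by positivity
    have hρα : ρ ^ α = θ ^ α * r ^ α := Real.mul_rpow hθ0.le hr0.le
    have hr2 : r ^ α * r ^ (2 - α) = r ^ 2 := by
      rw [← Real.rpow_add hr0]
      norm_num
    have e1 : θ ^ α * r ^ α * (C / r ^ α * A (2*r)) = θ ^ α * C * A (2*r) := by
      field_simp
    have e2 : θ ^ α * r ^ α * (C * r ^ (2-α)) = θ ^ α * C * r ^ 2 := by
      calc θ ^ α * r ^ α * (C * r ^ (2-α)) = θ ^ α * C * (r ^ α * r ^ (2-α)) := by ring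
        _ = θ ^ α * C * r ^ 2 := by rw [hr2]
    have hosc : |h y - h z| ≤ θ ^ α * C * A (2*r) + θ ^ α * C * r ^ 2 := by
      calc |h y - h z| ≤ ‖y - z‖ ^ α * (C / r ^ α * A (2*r) + C * r ^ (2 - α)) := hHo
        _ ≤ ρ ^ α * (C / r ^ α * A (2*r) + C * r ^ (2 - α)) :=
            mul_le_mul_of_nonneg_right hnorm hbrk
        _ = θ ^ α * C * A (2*r) + θ ^ α * C * r ^ 2 := by
            rw [hρα, mul_add, e1, e2]
    have hterm2 : θ ^ α * C * A (2*r) ≤ ε/3 * r^2 := by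
      have hcle : c ≤ ε/(12*C) := min_le_left _ _
      have h1 : θ ^ α * C * A (2*r) ≤ C * (c * (2*r)^2) := by
        nlinarith [mul_nonneg hC.le hA2r0]
      have h2 : C * (c * (2*r)^2) ≤ C * (ε/(12*C) * (4*r^2)) := by
        apply mul_le_mul_of_nonneg_left _ hC.le
        nlinarith [sq_nonneg r]
      have h3 : C * (ε/(12*C) * (4*r^2)) = ε/3 * r^2 := by field_simp; ring
      linarith
    have hterm3 : θ ^ α * C * r ^ 2 ≤ ε/3 * r^2 := by nlinarith [sq_nonneg r]
    have htri : |h y| ≤ |h y - h z| + |h z| := by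
      simpa using abs_add_le (h y - h z) (h z)
    calc |h y| ≤ |h y - h z| + |h z| := htri
      _ ≤ (θ ^ α * C * A (2*r) + θ ^ α * C * r ^ 2) + θ⁻¹ ^ n * (c * r ^ 2) :=
          add_le_add hosc hzbound
      _ ≤ ε/3 * r^2 + ε/3 * r^2 + ε/3 * r^2 := by linarith
      _ = ε * r^2 := by ring

end
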